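/- With A^n, H^n, i, p, h as above: for any two basis elements u, v of i(H^n) ⊂ A^n, multiplying h(u·v) or p-applied products involving a factor from the image of h by any further element of A^n and then applying h or p yields 0. Concretely: h(x^a · x^b) = x^{a+b−n} y if a+b ≥ n and 0 otherwise, and for any c ≥ 1, p(x^c · x^{a+b−n} y) = 0 and h(x^c · x^{a+b−n} y) = 0. Hence all transferred A_∞-operations m_k on H^n for k ≥ 3 vanish, so A^n is formal. -/

import Mathlib

noncomputable section

/-- The underlying vector space of the dg algebra `Aⁿ = k̄[x,y]`, with basis indexed by
`Sum.inl a ↔ x^(a+1)` (degree 0) and `Sum.inr a ↔ x^a y` (degree 1). -/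
abbrev A (k : Type*) [Field k] := (ℕ ⊕ ℕ) →₀ k

/-- `X k a` represents the monomial `x^(a+1)`. -/
def X (k : Type*) [Field k] (a : ℕ) : A k := Finsupp.single (Sum.inl a) 1

/-- `Y k a` represents the monomial `x^a y`. -/
def Y (k : Type*) [Field k] (a : ℕ) : A k := Finsupp.single (Sum.inr a) 1

/-- Homological degree of the basis monomials. -/
def deg : ℕ ⊕ ℕ → ℕ
  | .inl _ => 0
  | .inr _ => 1

/-- Product of basis monomials of `Aⁿ`. -/
def muBasis (k : Type*) [Field k] : ℕ ⊕ ℕ → ℕ ⊕ ℕ → A k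
  | .inl a, .inl b => X k (a + b + 1)
  | .inl a, .inr b => Y k (a + b + 1)
  | .inr a, .inl b => Y k (a + b + 1)
  | .inr _, .inr _ => 0

/-- The (bilinear) multiplication of `Aⁿ`. -/
def mulA (k : Type*) [Field k] : A k →ₗ[k] A k →ₗ[k] A k :=
  Finsupp.lsum k fun i => LinearMap.toSpanSingleton k (A k →ₗ[k] A k)
    (Finsupp.lsum k fun j => LinearMap.toSpanSingleton k (A k) (muBasis k i j))

/-- Value of the differential on basis monomials: `d(x^(a+1)) = 0`, `d(x^a y) = x^(a+n)`. -/
def dBasis (k : Type*) [Field k] (n : ℕ) : ℕ ⊕ ℕ → A k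
  | .inl _ => 0
  | .inr a => X k (a + n - 1)

/-- The differential of `Aⁿ`. -/
def dA (k : Type*) [Field k] (n : ℕ) : A k →ₗ[k] A k :=
  Finsupp.lsum k fun i => LinearMap.toSpanSingleton k (A k) (dBasis k n i)

end

noncomputable section

/-- `iMap` sends `z_(a+1)` to `x^(a+1)`. -/
def iMap (k : Type*) [Field k] (n : ℕ) : (Fin (n - 1) →₀ k) →ₗ[k] A k :=
  Finsupp.lsum k fun a => LinearMap.toSpanSingleton k (A k) (X k (a : ℕ))

/-- Value of `p` on basis monomials: `p(x^a) = z_a` for `a < n`, and `0` otherwise. -/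
def pBasis (k : Type*) [Field k] (n : ℕ) : ℕ ⊕ ℕ → (Fin (n - 1) →₀ k)
  | .inl a => if h : a < n - 1 then Finsupp.single ⟨a, h⟩ 1 else 0
  | .inr _ => 0

def pMap (k : Type*) [Field k] (n : ℕ) : A k →ₗ[k] (Fin (n - 1) →₀ k) :=
  Finsupp.lsum k fun i => LinearMap.toSpanSingleton k (Fin (n - 1) →₀ k) (pBasis k n i)

/-- Value of the homotopy `h` on basis monomials: `h(x^a) = x^(a−n) y` for `a ≥ n`,
`0` otherwise. -/
def hBasis (k : Type*) [Field k] (n : ℕ) : ℕ ⊕ ℕ → A k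
  | .inl a => if n ≤ a + 1 then Y k (a + 1 - n) else 0
  | .inr _ => 0

def hMap (k : Type*) [Field k] (n : ℕ) : A k →ₗ[k] A k :=
  Finsupp.lsum k fun i => LinearMap.toSpanSingleton k (A k) (hBasis k n i)

end

noncomputable section

/-- Concretely, `h(x^a · x^b) = x^(a+b−n) y` if `a + b ≥ n` and `0`
otherwise (encoded with `X k a = x^(a+1)`); moreover multiplying any element of `Aⁿ`
with an element in the image of `h` and then applying `p` or `h` yields `0`; in
particular `p(x^c · x^(a+b−n) y) = 0` and `h(x^c · x^(a+b−n) y) = 0`.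
(Hence all transferred `A_∞`-operations `m_k`, `k ≥ 3`, vanish and `Aⁿ` is formal.) -/

lemma mulA_single_single (k : Type*) [Field k] (i j : ℕ ⊕ ℕ) :
    mulA k (Finsupp.single i 1) (Finsupp.single j 1) = muBasis k i j := by
  simp [mulA, LinearMap.toSpanSingleton_apply]

lemma hMap_single (k : Type*) [Field k] (n : ℕ) (i : ℕ ⊕ ℕ) (c : k) :
    hMap k n (Finsupp.single i c) = c • hBasis k n i := by
  simp [hMap, LinearMap.toSpanSingleton_apply]

lemma pMap_single (k : Type*) [Field k] (n : ℕ) (i : ℕ ⊕ ℕ) (c : k) :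
    pMap k n (Finsupp.single i c) = c • pBasis k n i := by
  simp [pMap, LinearMap.toSpanSingleton_apply]

lemma pMap_mul_Y (k : Type*) [Field k] (n : ℕ) (u : A k) (a : ℕ) :
    pMap k n (mulA k u (Y k a)) = 0 := by
  induction u using Finsupp.induction_linear with
  | zero => simp
  | add f g hf hg => simp [map_add, LinearMap.add_apply, hf, hg]
  | single i c =>
    have : Finsupp.single i c = c • Finsupp.single i (1 : k) := by
      simp [Finsupp.smul_single]
    rw [this, map_smul, LinearMap.smul_apply, map_smul]
    rw [show Y k a = Finsupp.single (Sum.inr a) (1 : k) from rfl, mulA_single_single]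
    cases i with
    | inl b => simp [muBasis, Y, pMap_single, pBasis]
    | inr b => simp [muBasis]

lemma hMap_mul_Y (k : Type*) [Field k] (n : ℕ) (u : A k) (a : ℕ) :
    hMap k n (mulA k u (Y k a)) = 0 := by
  induction u using Finsupp.induction_linear with
  | zero => simp
  | add f g hf hg => simp [map_add, LinearMap.add_apply, hf, hg]
  | single i c =>
    have : Finsupp.single i c = c • Finsupp.single i (1 : k) := by
      simp [Finsupp.smul_single]
    rw [this, map_smul, LinearMap.smul_apply, map_smul]
    rw [show Y k a = Finsupp.single (Sum.inr a) (1 : k) from rfl, mulA_single_single]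
    cases i with
    | inl b => simp [muBasis, Y, hMap_single, hBasis]
    | inr b => simp [muBasis]

theorem stmt_6 (k : Type) [Field k] [CharZero k] (n : ℕ) (hn : 1 ≤ n) :
    (∀ a b : ℕ,
      hMap k n (mulA k (X k a) (X k b)) =
        if n ≤ a + b + 2 then Y k (a + b + 2 - n) else 0) ∧
    (∀ u w : A k, pMap k n (mulA k u (hMap k n w)) = 0) ∧
    (∀ u w : A k, hMap k n (mulA k u (hMap k n w)) = 0) ∧
    (∀ c a : ℕ, pMap k n (mulA k (X k c) (Y k a)) = 0) ∧
    (∀ c a : ℕ, hMap k n (mulA k (X k c) (Y k a)) = 0) := by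
  have hw : ∀ u w : A k,
      pMap k n (mulA k u (hMap k n w)) = 0 ∧ hMap k n (mulA k u (hMap k n w)) = 0 := by
    intro u w
    induction w using Finsupp.induction_linear with
    | zero => simp
    | add f g hf hg =>
      simp [map_add, hf.1, hf.2, hg.1, hg.2]
    | single i c =>
      rw [hMap_single]
      cases i with
      | inl a =>
        by_cases hle : n ≤ a + 1
        · simp only [hBasis, if_pos hle, map_smul, LinearMap.map_smul]
          constructor <;> simp [pMap_mul_Y, hMap_mul_Y]
        · simp [hBasis, if_neg hle]
      | inr a => simp [hBasis]
  refine ⟨?_, fun u w => (hw u w).1, fun u w => (hw u w).2,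
    fun c a => pMap_mul_Y k n (X k c) a, fun c a => hMap_mul_Y k n (X k c) a⟩
  intro a b
  rw [show X k a = Finsupp.single (Sum.inl a) (1 : k) from rfl,
    show X k b = Finsupp.single (Sum.inl b) (1 : k) from rfl, mulA_single_single]
  simp only [muBasis, X]
  rw [show Finsupp.single (Sum.inl (a + b + 1)) (1 : k) =
    Finsupp.single (Sum.inl (a + b + 1)) (1 : k) from rfl, hMap_single]
  simp only [hBasis]
  have : a + b + 1 + 1 = a + b + 2 := by ring
  rw [this]
  split <;> simp

end
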